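/- Let 𝔳 = {ν_i}_{i∈I} be a totally ordered set in V with no maximal element such that at least one polynomial is not 𝔳-stable. Let Q be a monic polynomial of smallest degree that is not 𝔳-stable, take γ ∈ Γ ∪ {∞} with γ > ν_i(Q) for every i ∈ I, and let μ be the valuation defined by μ(f_0 + f_1 Q + … + f_r Q^r) = min_{0≤j≤r} {𝔳(f_j) + jγ} on Q-expansions. Fix i ∈ I and f ∈ K[x]. Then ν_i(f) = μ(f) if and only if ν_i(f) = ν_j(f) for every j ≥ i; in particular, ν_i(f) = μ(f) implies that f is 𝔳-stable. -/

import Mathlib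

open Polynomial

/-- An additive valuation (possibly with nontrivial support) on a commutative
ring `R`, with values in `Γ ∪ {∞}`. -/
structure ValOn (R : Type*) [CommRing R] (Γ : Type*) [AddCommGroup Γ] [LinearOrder Γ] [IsOrderedAddMonoid Γ] where
  v : R → WithTop Γ
  v_zero : v 0 = ⊤
  v_one : v 1 = 0
  v_mul : ∀ a b, v (a * b) = v a + v b
  min_le_v_add : ∀ a b, min (v a) (v b) ≤ v (a + b)

namespace ValOn

variable {R : Type*} [CommRing R] {Γ : Type*} [AddCommGroup Γ] [LinearOrder Γ] [IsOrderedAddMonoid Γ]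

theorem v_neg (w : ValOn R Γ) (a : R) : w.v (-a) = w.v a := by
  have h1 : w.v (-1) + w.v (-1) = 0 := by
    rw [← w.v_mul]; norm_num [w.v_one]
  have h2 : w.v (-1) = 0 := by
    cases hx : w.v (-1) with
    | top => rw [hx] at h1; simp at h1
    | coe x =>
        rw [hx, ← WithTop.coe_add, ← WithTop.coe_zero, WithTop.coe_inj] at h1
        have hx0 : x = 0 := by
          rcases lt_trichotomy x 0 with hc | hc | hc
          · exact absurd h1 (ne_of_lt (add_neg hc hc))
          · exact hc
          · exact absurd h1 (ne_of_gt (add_pos hc hc))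
        rw [hx0, WithTop.coe_zero]
  calc w.v (-a) = w.v (-1 * a) := by rw [neg_one_mul]
  _ = w.v a := by rw [w.v_mul, h2, zero_add]

theorem le_v_sum (w : ValOn R Γ) {α : Type*} {γ : WithTop Γ} (s : Finset α) (h : α → R)
    (H : ∀ t ∈ s, γ ≤ w.v (h t)) : γ ≤ w.v (∑ t ∈ s, h t) := by
  classical
  induction s using Finset.induction_on with
  | empty => simp [w.v_zero]
  | insert _ _ hx ih =>
      rw [Finset.sum_insert hx]
      refine le_trans ?_ (w.min_le_v_add _ _)
      rw [le_min_iff]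
      exact ⟨H _ (Finset.mem_insert_self _ _),
        ih fun t ht => H t (Finset.mem_insert_of_mem ht)⟩

theorem lt_v_sum (w : ValOn R Γ) {α : Type*} {γ : WithTop Γ} (hγ : γ ≠ ⊤) (s : Finset α)
    (h : α → R) (H : ∀ t ∈ s, γ < w.v (h t)) : γ < w.v (∑ t ∈ s, h t) := by
  classical
  induction s using Finset.induction_on with
  | empty => simp [w.v_zero]; exact lt_top_iff_ne_top.mpr hγ
  | insert _ _ hx ih =>
      rw [Finset.sum_insert hx]
      refine lt_of_lt_of_le ?_ (w.min_le_v_add _ _)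
      rw [lt_min_iff]
      exact ⟨H _ (Finset.mem_insert_self _ _),
        ih fun t ht => H t (Finset.mem_insert_of_mem ht)⟩

/-- The subring `⊕_{γ ∈ Γ} P_γ` of the monoid algebra `R[Γ]`, where
`P_γ = {f : γ ≤ v f}`.  The graded ring `G_v = ⊕_γ P_γ/P_γ⁺` is realized below as the
quotient of this subring by the ideal `⊕_γ P_γ⁺`. -/
def gradedCarrier (w : ValOn R Γ) : Subring (AddMonoidAlgebra R Γ) where
  carrier := {s | ∀ γ : Γ, (γ : WithTop Γ) ≤ w.v (s.coeff γ)}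
  zero_mem' := by intro γ; simp [w.v_zero]
  one_mem' := by
    intro γ
    classical
    show (γ : WithTop Γ) ≤ w.v ((AddMonoidAlgebra.single (0:Γ) (1:R)).coeff γ)
    rw [AddMonoidAlgebra.coeff_single, Finsupp.single_apply]
    split_ifs with h
    · subst h; simp [w.v_one]
    · simp [w.v_zero]
  add_mem' := by
    intro a b ha hb γ
    show (γ : WithTop Γ) ≤ w.v (a.coeff γ + b.coeff γ)
    refine le_trans ?_ (w.min_le_v_add _ _)
    exact le_min (ha γ) (hb γ)
  neg_mem' := by
    intro a ha γ
    show (γ : WithTop Γ) ≤ w.v ((-a).coeff γ)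
    rw [AddMonoidAlgebra.coeff_neg, Finsupp.neg_apply, w.v_neg]
    exact ha γ
  mul_mem' := by
    classical
    intro a b ha hb γ
    rw [AddMonoidAlgebra.coeff_mul]
    rw [Finsupp.sum]
    refine w.le_v_sum _ _ (fun α hα => ?_)
    rw [Finsupp.sum]
    refine w.le_v_sum _ _ (fun β hβ => ?_)
    split_ifs with h
    · subst h
      rw [w.v_mul, WithTop.coe_add]
      exact add_le_add (ha α) (hb β)
    · simp [w.v_zero]

/-- The ideal `⊕_{γ ∈ Γ} P_γ⁺` of `gradedCarrier w`. -/
def gradedIdeal (w : ValOn R Γ) : Ideal (gradedCarrier w) where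
  carrier := {s | ∀ γ : Γ, (γ : WithTop Γ) < w.v ((s : AddMonoidAlgebra R Γ).coeff γ)}
  zero_mem' := by intro γ; simp [w.v_zero]
  add_mem' := by
    intro a b ha hb γ
    show (γ : WithTop Γ) < w.v ((a : AddMonoidAlgebra R Γ).coeff γ + (b : AddMonoidAlgebra R Γ).coeff γ)
    refine lt_of_lt_of_le ?_ (w.min_le_v_add _ _)
    exact lt_min (ha γ) (hb γ)
  smul_mem' := by
    classical
    intro c x hx γ
    rw [smul_eq_mul]
    show (γ : WithTop Γ) < w.v (((c : AddMonoidAlgebra R Γ) * (x : AddMonoidAlgebra R Γ)).coeff γ)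
    rw [AddMonoidAlgebra.coeff_mul, Finsupp.sum]
    refine w.lt_v_sum (WithTop.coe_ne_top) _ _ (fun α hα => ?_)
    rw [Finsupp.sum]
    refine w.lt_v_sum (WithTop.coe_ne_top) _ _ (fun β hβ => ?_)
    split_ifs with h
    · subst h
      rw [w.v_mul, WithTop.coe_add]
      exact WithTop.add_lt_add_of_le_of_lt WithTop.coe_ne_top (c.2 α) (hx β)
    · simp [w.v_zero]
end ValOn

/-- The graded ring `G_w = ⊕_{γ} P_γ/P_γ⁺` associated to the valuation `w`,
realized as a quotient. -/
abbrev Graded {R : Type*} [CommRing R] {Γ : Type*} [AddCommGroup Γ] [LinearOrder Γ] [IsOrderedAddMonoid Γ]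
    (w : ValOn R Γ) : Type _ :=
  (ValOn.gradedCarrier w) ⧸ (ValOn.gradedIdeal w)

namespace ValOn

variable {R : Type*} [CommRing R] {Γ : Type*} [AddCommGroup Γ] [LinearOrder Γ] [IsOrderedAddMonoid Γ]

/-- `inv_w f`, the initial form (image of `f` in the homogeneous component
`P_{v f}/P_{v f}⁺` of the graded ring), with `inv_w f = 0` when `f ∈ supp w`. -/
noncomputable def initialForm (w : ValOn R Γ) (f : R) : Graded w :=
  if h : w.v f = ⊤ then 0
  else Ideal.Quotient.mk (gradedIdeal w)
    ⟨AddMonoidAlgebra.single ((w.v f).untop h) f, by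
      intro γ
      classical
      show (γ : WithTop Γ) ≤ w.v ((AddMonoidAlgebra.single ((w.v f).untop h) f).coeff γ)
      rw [AddMonoidAlgebra.coeff_single, Finsupp.single_apply]
      split_ifs with hh
      · rw [← hh, WithTop.coe_untop]
      · simp [w.v_zero]⟩

theorem gradedCarrier_mono {w₁ w₂ : ValOn R Γ} (h : ∀ f, w₁.v f ≤ w₂.v f) :
    gradedCarrier w₁ ≤ gradedCarrier w₂ :=
  fun s hs γ => (hs γ).trans (h _)

/-- The homomorphism `φ : G_{w₁} → G_{w₂}` of graded rings, for `w₁ ≤ w₂`: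
it sends `inv_{w₁} f` to `inv_{w₂} f` if `w₁ f = w₂ f` and to `0` if `w₁ f < w₂ f`. -/
noncomputable def phi (w₁ w₂ : ValOn R Γ) (h : ∀ f, w₁.v f ≤ w₂.v f) :
    Graded w₁ →+* Graded w₂ :=
  Ideal.Quotient.lift (gradedIdeal w₁)
    ((Ideal.Quotient.mk (gradedIdeal w₂)).comp (Subring.inclusion (gradedCarrier_mono h)))
    (by
      intro a ha
      rw [RingHom.comp_apply, Ideal.Quotient.eq_zero_iff_mem]
      exact fun γ => lt_of_lt_of_le (ha γ) (h _))

end ValOn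


open ValOn

section PolyDefs

variable {K : Type*} [Field K] {Γ : Type*} [AddCommGroup Γ] [LinearOrder Γ] [IsOrderedAddMonoid Γ]

/-- A polynomial `f` is `𝔳`-stable for a family `𝔳 = (ν_i)_{i ∈ I}` if the values `ν_i(f)`
eventually stabilize. -/
def Stable {I : Type*} [Preorder I] (ν : I → ValOn (Polynomial K) Γ) (f : Polynomial K) : Prop :=
  ∃ i : I, ∀ j : I, i ≤ j → (ν j).v f = (ν i).v f

/-- The truncation `w_q` of `w` at `q`:
`w_q(f) = min_j w(f_j q^j)` where `f = ∑ f_j q^j` is the `q`-expansion of `f`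
(for monic non-constant `q`, the `j`-th coefficient of the `q`-expansion is
`(f /ₘ q^j) %ₘ q`, and all the nonzero coefficients occur for `j ≤ natDegree f`). -/
noncomputable def truncVal (w : ValOn (Polynomial K) Γ) (q f : Polynomial K) : WithTop Γ :=
  (Finset.range (f.natDegree + 1)).inf' Finset.nonempty_range_add_one
    (fun j => w.v (((f /ₘ q ^ j) %ₘ q) * q ^ j))

/-- `δ(f) = max {ν̄(x - a) : a a root of f}` for a polynomial over an algebraically closed
field, with the convention `δ(f) = ⊥ = -∞` when `f` has no roots (e.g. `deg f = 0`). -/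
noncomputable def deltaOf {F : Type*} [Field F] (wbar : ValOn (Polynomial F) Γ)
    (f : Polynomial F) : WithBot (WithTop Γ) :=
  (f.roots.map (fun a => ((wbar.v (X - C a) : WithTop Γ) : WithBot (WithTop Γ)))).sup

/-- `δ(f)` of `f ∈ K[x]`, computed via the fixed extension `ν̄` of `ν` to `K̄[x]`. -/
noncomputable def delta (wbar : ValOn (Polynomial (AlgebraicClosure K)) Γ)
    (f : Polynomial K) : WithBot (WithTop Γ) :=
  deltaOf wbar (f.map (algebraMap K (AlgebraicClosure K)))

/-- `Q` is a key polynomial (of level `δ(Q)`) for the valuation `ν` (with fixed extension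
`ν̄` to `K̄[x]`): `Q` is monic and `δ(f) ≥ δ(Q) → deg f ≥ deg Q` for every nonzero `f`. -/
def IsKeyPoly (wbar : ValOn (Polynomial (AlgebraicClosure K)) Γ) (Q : Polynomial K) : Prop :=
  Q.Monic ∧ ∀ f : Polynomial K, f ≠ 0 → delta wbar Q ≤ delta wbar f → Q.degree ≤ f.degree

/-- `Ψ_n`: the set of key polynomials of degree `n`. -/
def Psi (wbar : ValOn (Polynomial (AlgebraicClosure K)) Γ) (n : ℕ) : Set (Polynomial K) :=
  {Q | IsKeyPoly wbar Q ∧ Q.natDegree = n}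

/-- The set `K_n = {f : ν_Q(f) < ν(f) for all Q ∈ Ψ_n}`. -/
def LimitSet (w : ValOn (Polynomial K) Γ) (wbar : ValOn (Polynomial (AlgebraicClosure K)) Γ)
    (n : ℕ) : Set (Polynomial K) :=
  {f | ∀ Q ∈ Psi wbar n, truncVal w Q f < w.v f}

/-- A limit key polynomial for `Ψ_n`: a monic polynomial in `K_n` of least degree. -/
def IsLimitKeyPoly (w : ValOn (Polynomial K) Γ)
    (wbar : ValOn (Polynomial (AlgebraicClosure K)) Γ) (n : ℕ) (Qn : Polynomial K) : Prop :=
  Qn.Monic ∧ Qn ∈ LimitSet w wbar n ∧ ∀ g ∈ LimitSet w wbar n, Qn.degree ≤ g.degree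

/-- `g` is `𝔳`-stable for the family `𝔳 = (ν_Q)_{Q ∈ Ψ_n}`, ordered by `Q ⪯ Q' ↔ ν_Q ≤ ν_{Q'}`. -/
def PsiStable (w : ValOn (Polynomial K) Γ) (wbar : ValOn (Polynomial (AlgebraicClosure K)) Γ)
    (n : ℕ) (g : Polynomial K) : Prop :=
  ∃ Q ∈ Psi wbar n, ∀ Q' ∈ Psi wbar n,
    (∀ h : Polynomial K, truncVal w Q h ≤ truncVal w Q' h) → truncVal w Q' g = truncVal w Q g

/-- `v` is a Krull valuation: its support is trivial. -/
def IsKrullVal (v : Polynomial K → WithTop Γ) : Prop :=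
  ∀ f : Polynomial K, f ≠ 0 → v f ≠ ⊤

/-- The quotient group `v(K[x])/ν₀K` is a torsion group: every value of `v` has a positive
multiple lying in the value group of `ν₀`. -/
def TorsionOverBase (ν₀ : ValOn K Γ) (v : Polynomial K → WithTop Γ) : Prop :=
  ∀ f : Polynomial K, f ≠ 0 → ∃ m : ℕ, 0 < m ∧ ∃ a : K, a ≠ 0 ∧ m • v f = ν₀.v a

/-- `v` (a valuation on `K[x]` extending `ν₀`) is residue-transcendental: it is Krull and the
residue field extension `K(x)v ∣ Kν₀` is transcendental, i.e. there are `f, g` with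
`v f = v g` whose residue `res(f/g)` is transcendental over `Kν₀`: every polynomial over
`Kν₀` (with coefficients `res(c_i)`, not all zero) does not vanish at `res(f/g)`. -/
def ResidueTranscendental (ν₀ : ValOn K Γ) (v : Polynomial K → WithTop Γ) : Prop :=
  IsKrullVal v ∧ ∃ f g : Polynomial K, f ≠ 0 ∧ g ≠ 0 ∧ v f = v g ∧
    ∀ (n : ℕ) (c : ℕ → K), (∀ i, 0 ≤ ν₀.v (c i)) → (∃ i, i ≤ n ∧ ν₀.v (c i) = 0) →
      v (∑ i ∈ Finset.range (n + 1), Polynomial.C (c i) * f ^ i * g ^ (n - i)) = v (g ^ n)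

/-- `v` is value-transcendental: it is not Krull, or `v(K[x])/ν₀K` is not torsion. -/
def ValueTranscendental (ν₀ : ValOn K Γ) (v : Polynomial K → WithTop Γ) : Prop :=
  ¬ IsKrullVal v ∨ ¬ TorsionOverBase ν₀ v

/-- `v` is valuation-transcendental. -/
def ValuationTranscendental (ν₀ : ValOn K Γ) (v : Polynomial K → WithTop Γ) : Prop :=
  ValueTranscendental ν₀ v ∨ ResidueTranscendental ν₀ v

/-- `v` is valuation-algebraic. -/
def ValuationAlgebraic (ν₀ : ValOn K Γ) (v : Polynomial K → WithTop Γ) : Prop :=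
  ¬ ValuationTranscendental ν₀ v

end PolyDefs

section AuxStable

variable {K : Type*} [Field K]

lemma aux_assemble (Q c₀ : Polynomial K) (r : ℕ) (d : ℕ → Polynomial K) :
    c₀ + Q * (∑ j ∈ Finset.range (r + 1), d j * Q ^ j) =
      ∑ j ∈ Finset.range (r + 1 + 1), (if j = 0 then c₀ else d (j - 1)) * Q ^ j := by
  conv_rhs => rw [Finset.sum_range_succ']
  have h0 : (if (0 : ℕ) = 0 then c₀ else d (0 - 1)) * Q ^ 0 = c₀ := by simp
  have hs : ∀ j ∈ Finset.range (r + 1),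
      (if j + 1 = 0 then c₀ else d (j + 1 - 1)) * Q ^ (j + 1) = Q * (d j * Q ^ j) := by
    intro j _
    rw [if_neg (Nat.succ_ne_zero j), Nat.add_sub_cancel]
    ring
  rw [h0, Finset.sum_congr rfl hs, ← Finset.mul_sum, add_comm]

lemma aux_expansion (Q : Polynomial K) (hQ : Q.Monic) (h0 : 0 < Q.degree) (f : Polynomial K) :
    ∃ (r : ℕ) (c : ℕ → Polynomial K),
      f = ∑ j ∈ Finset.range (r + 1), c j * Q ^ j ∧ ∀ j, (c j).degree < Q.degree := by
  have H : ∀ (n : ℕ) (f : Polynomial K), f.natDegree ≤ n →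
      ∃ (r : ℕ) (c : ℕ → Polynomial K),
        f = ∑ j ∈ Finset.range (r + 1), c j * Q ^ j ∧ ∀ j, (c j).degree < Q.degree := by
    intro n
    induction n with
    | zero =>
        intro f hf
        refine ⟨0, fun j => if j = 0 then f else 0, by simp, fun j => ?_⟩
        rcases j with _ | j
        · simp only [if_pos rfl]
          refine lt_of_le_of_lt ?_ h0
          refine le_trans Polynomial.degree_le_natDegree ?_
          exact_mod_cast Nat.cast_le.mpr hf
        · simpa using lt_of_le_of_lt bot_le h0
    | succ n ih =>
        intro f hf
        rcases lt_or_ge f.degree Q.degree with hlt | hge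
        · exact ⟨0, fun j => if j = 0 then f else 0, by simp, fun j => by
            rcases j with _ | j
            · simpa using hlt
            · simpa using lt_of_le_of_lt bot_le h0⟩
        · have hfne : f ≠ 0 := by
            intro h
            rw [h, Polynomial.degree_zero, le_bot_iff] at hge
            rw [hge] at h0
            exact absurd h0 (by simp)
          have hdlt : (f /ₘ Q).degree < f.degree :=
            Polynomial.degree_divByMonic_lt f Q hfne h0
          have hdn : (f /ₘ Q).natDegree ≤ n := by
            by_cases hz : f /ₘ Q = 0
            · simp [hz]
            · have := Polynomial.natDegree_lt_natDegree hz hdlt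
              omega
          obtain ⟨r, d, hd1, hd2⟩ := ih (f /ₘ Q) hdn
          refine ⟨r + 1, fun j => if j = 0 then f %ₘ Q else d (j - 1), ?_, fun j => ?_⟩
          · rw [← aux_assemble, ← hd1, Polynomial.modByMonic_add_div f Q]
          · rcases j with _ | j
            · simpa using Polynomial.degree_modByMonic_lt f hQ
            · simpa using hd2 j
  exact H f.natDegree f le_rfl

end AuxStable

/-- `ν_i(f) = μ(f)` iff `ν_i(f) = ν_j(f)` for every `j ≥ i`;
in particular, `ν_i(f) = μ(f)` implies `f` is `𝔳`-stable. -/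
theorem value_eq_limit_iff_stable_at
    {K : Type*} [Field K] {Γ : Type*} [AddCommGroup Γ] [LinearOrder Γ] [IsOrderedAddMonoid Γ]
    {I : Type*} [LinearOrder I] [Nonempty I]
    (ν₀ : ValOn K Γ) (ν : I → ValOn (Polynomial K) Γ)
    (hext : ∀ (i : I) (a : K), (ν i).v (Polynomial.C a) = ν₀.v a)
    (hmono : ∀ i j : I, i ≤ j → ∀ f : Polynomial K, (ν i).v f ≤ (ν j).v f)
    (hstrict : ∀ i j : I, i < j → ∃ f : Polynomial K, (ν i).v f < (ν j).v f)
    (hnomax : ∀ i : I, ∃ j : I, i < j)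
    (Q : Polynomial K) (hQmonic : Q.Monic) (hQns : ¬ Stable ν Q)
    (hQmin : ∀ g : Polynomial K, ¬ Stable ν g → Q.degree ≤ g.degree)
    (γ : WithTop Γ) (hγ : ∀ i : I, (ν i).v Q < γ)
    (μ : ValOn (Polynomial K) Γ)
    (hμext : ∀ a : K, μ.v (Polynomial.C a) = ν₀.v a)
    (hμ : ∀ (f : Polynomial K) (r : ℕ) (c : ℕ → Polynomial K),
      f = ∑ j ∈ Finset.range (r + 1), c j * Q ^ j →
      (∀ j : ℕ, (c j).degree < Q.degree) →
      ∃ i₀ : I, ∀ i : I, i₀ ≤ i →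
        μ.v f = (Finset.range (r + 1)).inf' Finset.nonempty_range_add_one
          (fun j => (ν i).v (c j) + j • γ))
    (i : I) (f : Polynomial K) :
    ((ν i).v f = μ.v f ↔ ∀ j : I, i ≤ j → (ν i).v f = (ν j).v f) ∧
    ((ν i).v f = μ.v f → Stable ν f) := by
  classical
  -- `Q` has positive degree
  have hQ0 : (0 : WithBot ℕ) < Q.degree := by
    by_contra h
    push_neg at h
    have hQ1 : Q = 1 := by
      have hc := Polynomial.eq_C_of_degree_le_zero h
      have hn0 : Q.natDegree = 0 := Polynomial.natDegree_eq_zero_iff_degree_le_zero.mpr h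
      have h1 : Q.coeff 0 = 1 := by
        have := hQmonic
        rwa [Polynomial.Monic, Polynomial.leadingCoeff, hn0] at this
      rw [hc, h1, map_one]
    exact hQns ⟨Classical.arbitrary I, fun j _ => by rw [hQ1, (ν j).v_one, (ν _).v_one]⟩
  -- `ν_i Q` keeps growing
  have hQgrow : ∀ i' : I, ∃ j', i' ≤ j' ∧ (ν i').v Q < (ν j').v Q := by
    intro i'
    by_contra hcc
    push_neg at hcc
    exact hQns ⟨i', fun j'' hj'' => le_antisymm (hcc j'' hj'') (hmono _ _ hj'' Q)⟩
  -- subtraction inequality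
  have hmin_sub : ∀ (w : ValOn (Polynomial K) Γ) (a b : Polynomial K),
      min (w.v a) (w.v b) ≤ w.v (a - b) := by
    intro w a b
    have h := w.min_le_v_add a (-b)
    rw [w.v_neg] at h
    simpa [sub_eq_add_neg] using h
  -- small polynomials: `μ` equals `ν_i` eventually
  have hsmall : ∀ g : Polynomial K, g.degree < Q.degree →
      ∃ i₀ : I, ∀ i' : I, i₀ ≤ i' → μ.v g = (ν i').v g := by
    intro g hg
    obtain ⟨i₀, hi⟩ := hμ g 0 (fun j => if j = 0 then g else 0)
      (by simp)
      (fun j => by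
        rcases j with _ | j
        · simpa using hg
        · simpa using lt_of_le_of_lt bot_le hQ0)
    refine ⟨i₀, fun i' hii => ?_⟩
    have h := hi i' hii
    simpa [Finset.range_one] using h
  -- Fact A : `ν_j ≤ μ` on every polynomial
  have hsmall_le : ∀ g : Polynomial K, g.degree < Q.degree → ∀ j : I, (ν j).v g ≤ μ.v g := by
    intro g hgd j
    obtain ⟨i₀, hi⟩ := hsmall g hgd
    calc (ν j).v g ≤ (ν (max j i₀)).v g := hmono _ _ (le_max_left _ _) g
    _ = μ.v g := (hi _ (le_max_right _ _)).symm
  have factA : ∀ (n : ℕ) (g : Polynomial K), g.natDegree ≤ n → ∀ j : I, (ν j).v g ≤ μ.v g := by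
    intro n
    induction n with
    | zero =>
        intro g hg j
        refine hsmall_le g ?_ j
        refine lt_of_le_of_lt (le_trans Polynomial.degree_le_natDegree ?_) hQ0
        exact_mod_cast Nat.cast_le.mpr hg
    | succ n ih =>
        intro g hg j
        rcases lt_or_ge g.degree Q.degree with hlt | hge
        · exact hsmall_le g hlt j
        · have hgne : g ≠ 0 := by
            intro h
            rw [h, Polynomial.degree_zero, le_bot_iff] at hge
            rw [hge] at hQ0
            exact absurd hQ0 (by simp)
          set c₀ := g %ₘ Q with hc₀
          set h := g /ₘ Q with hhdef
          have hfe : g = c₀ + Q * h := (Polynomial.modByMonic_add_div g Q).symm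
          have hhn : h.natDegree ≤ n := by
            by_cases hz : h = 0
            · simp [hz]
            · have := Polynomial.natDegree_lt_natDegree hz
                (Polynomial.degree_divByMonic_lt g Q hgne hQ0)
              omega
          obtain ⟨r, d, hhr, hdd⟩ := aux_expansion Q hQmonic hQ0 h
          set c : ℕ → Polynomial K := fun k => if k = 0 then c₀ else d (k - 1) with hcdef
          have hge' : g = ∑ k ∈ Finset.range (r + 1 + 1), c k * Q ^ k := by
            rw [hfe, hhr, aux_assemble]
          have hdeg : ∀ k, (c k).degree < Q.degree := by
            intro k
            rcases k with _ | k
            · simpa [hcdef] using Polynomial.degree_modByMonic_lt g hQmonic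
            · simpa [hcdef] using hdd k
          obtain ⟨i₀f, hif⟩ := hμ g (r + 1) c hge' hdeg
          obtain ⟨i₀h, hih⟩ := hμ h r d hhr hdd
          obtain ⟨e0, he0⟩ := hsmall c₀ (Polynomial.degree_modByMonic_lt g hQmonic)
          by_contra hcon
          push_neg at hcon
          set i' := max (max j i₀f) (max e0 i₀h) with hi'def
          have hji' : j ≤ i' := le_trans (le_max_left _ _) (le_max_left _ _)
          have hi₀fi' : i₀f ≤ i' := le_trans (le_max_right _ _) (le_max_left _ _)
          have he0i' : e0 ≤ i' := le_trans (le_max_left _ _) (le_max_right _ _)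
          have hi₀hi' : i₀h ≤ i' := le_trans (le_max_right _ _) (le_max_right _ _)
          have hνig : μ.v g < (ν i').v g := lt_of_lt_of_le hcon (hmono j i' hji' g)
          have hμg := hif i' hi₀fi'
          have hle0 : μ.v g ≤ (ν i').v c₀ := by
            rw [hμg]
            have h0mem : (0 : ℕ) ∈ Finset.range (r + 1 + 1) := by simp
            have := Finset.inf'_le (fun k => (ν i').v (c k) + k • γ) h0mem
            exact this.trans (by simp [hcdef])
          have hμgne : μ.v g ≠ ⊤ := ne_top_of_lt hνig
          rcases eq_or_lt_of_le hle0 with hA | hB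
          · -- case μ g = ν c₀ : the value of Q*h is frozen, contradicting growth of ν Q
            have hQh : ∀ i'', i' ≤ i'' → (ν i'').v Q + (ν i'').v h = μ.v g := by
              intro i'' hi''
              have hc0v : (ν i'').v c₀ = μ.v g := by
                rw [hA]
                rw [← he0 i' he0i', ← he0 i'' (le_trans he0i' hi'')]
              have hfg : μ.v g < (ν i'').v g := lt_of_lt_of_le hνig (hmono i' i'' hi'' g)
              rw [← (ν i'').v_mul]
              refine le_antisymm ?_ ?_
              · by_contra hx
                push_neg at hx
                have h3 : c₀ = g - Q * h := by rw [hfe]; ring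
                have hmin := hmin_sub (ν i'') g (Q * h)
                rw [← h3, hc0v] at hmin
                exact absurd (lt_of_lt_of_le (lt_min hfg hx) hmin) (lt_irrefl _)
              · have h2 : Q * h = g - c₀ := by rw [hfe]; ring
                rw [h2]
                refine le_trans (le_min hfg.le hc0v.ge) (hmin_sub (ν i'') g c₀)
            obtain ⟨j', hij', hQlt⟩ := hQgrow i'
            have h1 := hQh i' le_rfl
            have h2 := hQh j' hij'
            have hhne : (ν i').v h ≠ ⊤ := by
              intro ht
              rw [ht, add_top] at h1
              exact hμgne h1.symm
            have : μ.v g < μ.v g := by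
              calc μ.v g = (ν i').v Q + (ν i').v h := h1.symm
              _ < (ν j').v Q + (ν j').v h :=
                  WithTop.add_lt_add_of_lt_of_le hhne hQlt (hmono i' j' hij' h)
              _ = μ.v g := h2
            exact absurd this (lt_irrefl _)
          · -- case μ g < ν c₀ : the minimum is attained at k ≥ 1
            obtain ⟨k₀, hk₀mem, hk₀⟩ :=
              Finset.exists_mem_eq_inf' (Finset.nonempty_range_add_one)
                (fun k => (ν i').v (c k) + k • γ)
            have hk₀ne : k₀ ≠ 0 := by
              intro h0
              rw [h0] at hk₀
              rw [← hμg] at hk₀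
              simp only [hcdef, if_pos rfl, zero_nsmul, add_zero] at hk₀
              rw [hk₀] at hB
              exact absurd hB (lt_irrefl _)
            obtain ⟨k₁, rfl⟩ := Nat.exists_eq_succ_of_ne_zero hk₀ne
            have hck : c (k₁ + 1) = d k₁ := by simp [hcdef]
            have hμgval : μ.v g = (ν i').v (d k₁) + (k₁ + 1) • γ := by
              rw [hμg, hk₀, hck]
            have hk₁mem : k₁ ∈ Finset.range (r + 1) := by
              have := Finset.mem_range.mp hk₀mem
              exact Finset.mem_range.mpr (by omega)
            have hμh := hih i' hi₀hi'
            have hμh_le : μ.v h ≤ (ν i').v (d k₁) + k₁ • γ := by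
              rw [hμh]
              exact Finset.inf'_le _ hk₁mem
            have hγμh : γ + μ.v h ≤ μ.v g := by
              calc γ + μ.v h ≤ γ + ((ν i').v (d k₁) + k₁ • γ) := add_le_add le_rfl hμh_le
              _ = (ν i').v (d k₁) + (k₁ + 1) • γ := by
                  rw [succ_nsmul']
                  abel
              _ = μ.v g := hμgval.symm
            have hμhne : μ.v h ≠ ⊤ := by
              intro ht
              rw [ht, add_top, top_le_iff] at hγμh
              exact hμgne hγμh
            have hihne : (ν i').v h ≠ ⊤ :=
              fun ht => hμhne (top_le_iff.mp (ht ▸ ih h hhn i'))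
            have hQhlt : (ν i').v (Q * h) < μ.v g := by
              calc (ν i').v (Q * h) = (ν i').v Q + (ν i').v h := (ν i').v_mul Q h
              _ < γ + μ.v h :=
                  WithTop.add_lt_add_of_lt_of_le hihne (hγ i') (ih h hhn i')
              _ ≤ μ.v g := hγμh
            have hQhgt : μ.v g < (ν i').v (Q * h) := by
              have h2 : Q * h = g - c₀ := by rw [hfe]; ring
              rw [h2]
              exact lt_of_lt_of_le (lt_min hνig hB) (hmin_sub (ν i') g c₀)
            exact absurd (hQhlt.trans hQhgt) (lt_irrefl _)
  have hAle : ∀ (g : Polynomial K) (j : I), (ν j).v g ≤ μ.v g :=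
    fun g j => factA g.natDegree g le_rfl j
  -- forward direction
  have fwd : (ν i).v f = μ.v f → ∀ j : I, i ≤ j → (ν i).v f = (ν j).v f := by
    intro he j hij
    refine le_antisymm (hmono i j hij f) ?_
    rw [he]
    exact hAle f j
  -- backward direction
  have bwd : (∀ j : I, i ≤ j → (ν i).v f = (ν j).v f) → (ν i).v f = μ.v f := by
    intro hs
    refine le_antisymm (hAle f i) ?_
    by_contra hcon
    push_neg at hcon
    obtain ⟨r, c, hfr, hcd⟩ := aux_expansion Q hQmonic hQ0 f
    obtain ⟨i₀f, hif⟩ := hμ f r c hfr hcd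
    obtain ⟨e0, he0⟩ := hsmall (c 0) (hcd 0)
    set h := ∑ k ∈ Finset.range r, c (k + 1) * Q ^ k with hh
    have hfe : f = c 0 + Q * h := by
      rw [hfr, Finset.sum_range_succ', hh, Finset.mul_sum]
      rw [add_comm]
      congr 1
      · simp
      · refine Finset.sum_congr rfl fun k _ => ?_
        ring
    set i' := max (max i i₀f) e0 with hi'def
    have hii' : i ≤ i' := le_trans (le_max_left _ _) (le_max_left _ _)
    have hi₀fi' : i₀f ≤ i' := le_trans (le_max_right _ _) (le_max_left _ _)
    have he0i' : e0 ≤ i' := le_max_right _ _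
    have hi'f : (ν i').v f = (ν i).v f := (hs i' hii').symm
    have hlt' : (ν i').v f < μ.v f := by rw [hi'f]; exact hcon
    have hμf := hif i' hi₀fi'
    have hle0 : μ.v f ≤ (ν i').v (c 0) := by
      rw [hμf]
      have h0mem : (0 : ℕ) ∈ Finset.range (r + 1) := by simp
      have := Finset.inf'_le (fun k => (ν i').v (c k) + k • γ) h0mem
      exact this.trans (by simp)
    have h1 : (ν i').v f < (ν i').v (c 0) := lt_of_lt_of_le hlt' hle0
    have hQh : (ν i').v Q + (ν i').v h = (ν i').v f := by
      rw [← (ν i').v_mul]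
      refine le_antisymm ?_ ?_
      · by_contra hx
        push_neg at hx
        have hmin := (ν i').min_le_v_add (c 0) (Q * h)
        rw [← hfe] at hmin
        exact absurd (lt_of_lt_of_le (lt_min h1 hx) hmin) (lt_irrefl _)
      · have h2 : Q * h = f - c 0 := by rw [hfe]; ring
        rw [h2]
        exact le_trans (le_min le_rfl h1.le) (hmin_sub (ν i') f (c 0))
    have hffin : (ν i').v f ≠ ⊤ := ne_top_of_lt hlt'
    have hhfin : (ν i').v h ≠ ⊤ := by
      intro ht
      rw [ht, add_top] at hQh
      exact hffin hQh.symm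
    obtain ⟨j', hij', hQlt⟩ := hQgrow i'
    have hstep : (ν i').v f < (ν j').v f := by
      have hj'c0 : (ν i').v f < (ν j').v (c 0) :=
        lt_of_lt_of_le h1 (hmono i' j' hij' (c 0))
      have hj'Qh : (ν i').v f < (ν j').v (Q * h) := by
        rw [(ν j').v_mul]
        calc (ν i').v f = (ν i').v Q + (ν i').v h := hQh.symm
        _ < (ν j').v Q + (ν j').v h :=
            WithTop.add_lt_add_of_lt_of_le hhfin hQlt (hmono i' j' hij' h)
      have hmin := (ν j').min_le_v_add (c 0) (Q * h)
      rw [← hfe] at hmin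
      exact lt_of_lt_of_le (lt_min hj'c0 hj'Qh) hmin
    have hcst : (ν i).v f = (ν j').v f := hs j' (le_trans hii' hij')
    rw [← hi'f] at hcst
    rw [← hcst] at hstep
    exact absurd hstep (lt_irrefl _)
  exact ⟨⟨fwd, bwd⟩, fun he => ⟨i, fun j hj => (fwd he j hj).symm⟩⟩
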